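/- Let p be a prime, q = p^α a prime power, 1 ≤ s < q, and L = {1,...,s}. If F ⊆ 2^[n] is a family such that |E| ≡ 0 (mod q) for each E ∈ F and |E ∩ F'| mod q ∈ L for all distinct E, F' ∈ F, then |F| ≤ Σ_{j=0}^{s} C(n-1, j). -/

import Mathlib

open Finset Nat



-- helper: valuation of (y + d) where p^a ∣ y and 0 < d < p^a
lemma val_add_small {p a d y : ℕ} (hp : p.Prime) (hd1 : 1 ≤ d) (hdq : d < p ^ a)
    (hy : p ^ a ∣ y) : padicValNat p (y + d) = padicValNat p d := by
  haveI : Fact p.Prime := ⟨hp⟩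
  set e := padicValNat p d with he
  have hpe : p ^ e ∣ d := pow_padicValNat_dvd
  have hea : e < a := by
    by_contra h
    push_neg at h
    exact absurd (Nat.le_of_dvd hd1 ((pow_dvd_pow p h).trans hpe)) (by omega)
  have hdvd : p ^ e ∣ y + d := dvd_add ((pow_dvd_pow p hea.le).trans hy) hpe
  have hnd : ¬ p ^ (e + 1) ∣ y + d := by
    intro h
    have h2 : p ^ (e + 1) ∣ d := by
      have : p ^ (e + 1) ∣ y := (pow_dvd_pow p hea).trans hy
      simpa using Nat.dvd_sub h this
    have := (padicValNat_dvd_iff_le (by omega : d ≠ 0)).mp h2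
    omega
  have h1 : e ≤ padicValNat p (y + d) :=
    (padicValNat_dvd_iff_le (by omega : y + d ≠ 0)).mp hdvd
  have h2 : ¬ (e + 1 ≤ padicValNat p (y + d)) := fun h =>
    hnd ((padicValNat_dvd_iff_le (by omega : y + d ≠ 0)).mpr h)
  omega

lemma val_sub_small {p a d y : ℕ} (hp : p.Prime) (hd1 : 1 ≤ d) (hdq : d < p ^ a)
    (hdy : d < y) (hy : p ^ a ∣ y) : padicValNat p (y - d) = padicValNat p d := by
  haveI : Fact p.Prime := ⟨hp⟩
  set e := padicValNat p d with he
  have hpe : p ^ e ∣ d := pow_padicValNat_dvd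
  have hea : e < a := by
    by_contra h
    push_neg at h
    exact absurd (Nat.le_of_dvd hd1 ((pow_dvd_pow p h).trans hpe)) (by omega)
  have hdvd : p ^ e ∣ y - d := Nat.dvd_sub ((pow_dvd_pow p hea.le).trans hy) hpe
  have hnd : ¬ p ^ (e + 1) ∣ y - d := by
    intro h
    have h2 : p ^ (e + 1) ∣ d := by
      have hyy : p ^ (e + 1) ∣ y := (pow_dvd_pow p hea).trans hy
      have := Nat.dvd_sub hyy h
      simpa [Nat.sub_sub_self hdy.le] using this
    have := (padicValNat_dvd_iff_le (by omega : d ≠ 0)).mp h2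
    omega
  have h1 : e ≤ padicValNat p (y - d) :=
    (padicValNat_dvd_iff_le (by omega : y - d ≠ 0)).mp hdvd
  have h2 : ¬ (e + 1 ≤ padicValNat p (y - d)) := fun h =>
    hnd ((padicValNat_dvd_iff_le (by omega : y - d ≠ 0)).mpr h)
  omega


lemma padic_val_prod {p : ℕ} (hp : p.Prime) {α : Type*} {S : Finset α} {f : α → ℕ}
    (h : ∀ x ∈ S, f x ≠ 0) :
    padicValNat p (∏ x ∈ S, f x) = ∑ x ∈ S, padicValNat p (f x) := by
  have h2 : (∏ x ∈ S, f x).factorization p = ∑ x ∈ S, (f x).factorization p := by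
    rw [Nat.factorization_prod h]
    simp [Finsupp.finset_sum_apply]
  rw [Nat.factorization_def _ hp] at h2
  rw [h2]
  exact Finset.sum_congr rfl fun x hx => Nat.factorization_def _ hp

lemma kummer_bound {p a s i0 : ℕ} (hp : p.Prime) (ha : 1 ≤ a) (hi0 : 1 ≤ i0) (his : i0 ≤ s)
    (hsq : s < p ^ a) :
    padicValNat p s + padicValNat p ((s - 1).choose (i0 - 1)) ≤ a - 1 := by
  haveI : Fact p.Prime := ⟨hp⟩
  set e := padicValNat p s with he
  have hs1 : 1 ≤ s := le_trans hi0 his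
  have hpe : p ^ e ∣ s := pow_padicValNat_dvd
  have hea : e < a := by
    by_contra h
    push_neg at h
    have h1 : p ^ a ≤ p ^ e := pow_le_pow_right₀ hp.one_lt.le h
    have h2 : p ^ e ≤ s := Nat.le_of_dvd (by omega) hpe
    omega
  have hlog : log p (s - 1) < a := by
    rcases Nat.eq_zero_or_pos (s - 1) with h0 | h0
    · rw [h0, Nat.log_zero_right]; omega
    · exact Nat.log_lt_of_lt_pow (by omega) (by omega)
  have hkn : i0 - 1 ≤ s - 1 := by omega
  rw [padicValNat_choose hkn hlog]
  have hsub : ((Finset.Ico 1 a).filter fun i =>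
      p ^ i ≤ (i0 - 1) % p ^ i + (s - 1 - (i0 - 1)) % p ^ i) ⊆ Finset.Ico (e + 1) a := by
    intro j hj
    rw [Finset.mem_filter, Finset.mem_Ico] at hj
    obtain ⟨⟨hj1, hja⟩, hcarry⟩ := hj
    rw [Finset.mem_Ico]
    refine ⟨?_, hja⟩
    by_contra hje
    push_neg at hje
    have hje : j ≤ e := by omega
    have hPs : p ^ j ∣ s := (pow_dvd_pow p hje).trans hpe
    set P := p ^ j with hPdef
    have hP1 : 1 ≤ P := Nat.one_le_pow _ _ hp.pos
    obtain ⟨m, hm⟩ := hPs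
    set A := (i0 - 1) % P with hA
    set B := (s - 1 - (i0 - 1)) % P with hB
    have hAP : A < P := Nat.mod_lt _ (by omega)
    have hBP : B < P := Nat.mod_lt _ (by omega)
    have hABmod : (A + B) % P = (s - 1) % P := by
      rw [hA, hB, ← Nat.add_mod]
      congr 1
      omega
    have hs1P : (s - 1) % P = P - 1 := by
      cases m with
      | zero => omega
      | succ m' =>
        have hsplit : s - 1 = P * m' + (P - 1) := by
          rw [Nat.mul_succ] at hm; omega
        rw [hsplit, Nat.mul_add_mod]
        exact Nat.mod_eq_of_lt (by omega)
    have hPAB : P ≤ A + B := hcarry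
    have hmod2 : (A + B) % P = A + B - P := by
      rw [Nat.mod_eq_sub_mod hPAB]
      exact Nat.mod_eq_of_lt (by omega)
    omega
  have hcard := Finset.card_le_card hsub
  rw [Nat.card_Ico] at hcard
  omega


lemma choose_mul_fact_eq_prod (x s : ℕ) :
    ((x - 1).choose s) * s ! = ∏ i ∈ Finset.Ico 1 (s + 1), (x - i) := by
  rw [Finset.prod_Ico_eq_prod_range]
  have h1 : (∏ i ∈ Finset.range (s + 1 - 1), (x - (1 + i))) = (x - 1).descFactorial s := by
    rw [Nat.descFactorial_eq_prod_range]
    apply Finset.prod_congr (by rw [Nat.add_sub_cancel])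
    intro i _
    omega
  rw [h1, Nat.descFactorial_eq_factorial_mul_choose, Nat.mul_comm]

lemma val_factorial_sum {p : ℕ} (hp : p.Prime) (m : ℕ) :
    padicValNat p (m !) = ∑ i ∈ Finset.Ico 1 (m + 1), padicValNat p i := by
  have h1 : m ! = ∏ i ∈ Finset.Ico 1 (m + 1), i := by
    rw [Finset.prod_Ico_eq_prod_range]
    have : (∏ i ∈ Finset.range (m + 1 - 1), (1 + i)) = ∏ i ∈ Finset.range m, (i + 1) := by
      apply Finset.prod_congr (by rw [Nat.add_sub_cancel])
      intro i _; omega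
    rw [this, Finset.prod_range_add_one_eq_factorial]
  rw [h1, padic_val_prod hp]
  intro i hi
  rw [Finset.mem_Ico] at hi
  omega

lemma key_nondvd {p a s x : ℕ} (hp : p.Prime) (hs1 : 1 ≤ s) (hsq : s < p ^ a)
    (hx : p ^ a ∣ x) (hx0 : 0 < x) : ¬ p ∣ (x - 1).choose s := by
  haveI : Fact p.Prime := ⟨hp⟩
  have hqx : p ^ a ≤ x := Nat.le_of_dvd hx0 hx
  have hsx : s < x := lt_of_lt_of_le hsq hqx
  have hprod := choose_mul_fact_eq_prod x s
  have hterm : ∀ i ∈ Finset.Ico 1 (s + 1), padicValNat p (x - i) = padicValNat p i := by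
    intro i hi
    rw [Finset.mem_Ico] at hi
    exact val_sub_small hp (by omega) (by omega) (by omega) hx
  have hne : ∀ i ∈ Finset.Ico 1 (s + 1), x - i ≠ 0 := by
    intro i hi; rw [Finset.mem_Ico] at hi; omega
  have hv : padicValNat p (∏ i ∈ Finset.Ico 1 (s + 1), (x - i)) = padicValNat p (s !) := by
    rw [padic_val_prod hp hne, val_factorial_sum hp]
    exact Finset.sum_congr rfl hterm
  have hcpos : 0 < (x - 1).choose s := Nat.choose_pos (by omega)
  have hmul : padicValNat p ((x - 1).choose s * s !) =
      padicValNat p ((x - 1).choose s) + padicValNat p (s !) :=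
    padicValNat.mul (by omega) (Nat.factorial_ne_zero s)
  rw [hprod, hv] at hmul
  have hv0 : padicValNat p ((x - 1).choose s) = 0 := by omega
  intro hdvd
  have := one_le_padicValNat_of_dvd hcpos.ne' hdvd
  omega

lemma key_dvd {p a s x : ℕ} (hp : p.Prime) (ha : 1 ≤ a) (hs1 : 1 ≤ s) (hsq : s < p ^ a)
    (h1 : 1 ≤ x % p ^ a) (h2 : x % p ^ a ≤ s) : p ∣ (x - 1).choose s := by
  haveI : Fact p.Prime := ⟨hp⟩
  set i0 := x % p ^ a with hi0def
  by_cases hxq : x < p ^ a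
  · have hxi : i0 = x := Nat.mod_eq_of_lt hxq
    have : (x - 1).choose s = 0 := Nat.choose_eq_zero_of_lt (by omega)
    simp [this]
  · push_neg at hxq
    set y := p ^ a * (x / p ^ a) with hydef
    have hyx : y + i0 = x := Nat.div_add_mod x (p ^ a)
    have hyq : p ^ a ≤ y := by
      have : 1 ≤ x / p ^ a := Nat.one_le_div_iff (pow_pos hp.pos a) |>.mpr hxq
      calc p ^ a = p ^ a * 1 := by ring
        _ ≤ y := by rw [hydef]; exact Nat.mul_le_mul_left _ this
    have hyd : p ^ a ∣ y := Dvd.intro _ rfl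
    have hy0 : y ≠ 0 := by have := Nat.one_le_pow a p hp.pos; omega
    have hsx : s < x := by have := Nat.one_le_pow a p hp.pos; omega
    -- valuation of the product, lower bound
    have hne : ∀ i ∈ Finset.Ico 1 (s + 1), x - i ≠ 0 := by
      intro i hi; rw [Finset.mem_Ico] at hi; omega
    have hsplit1 : (∑ i ∈ Finset.Ico 1 i0, padicValNat p (x - i)) +
        (∑ i ∈ Finset.Ico i0 (s + 1), padicValNat p (x - i)) =
        ∑ i ∈ Finset.Ico 1 (s + 1), padicValNat p (x - i) :=
      Finset.sum_Ico_consecutive _ (by omega) (by omega)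
    have hsplit2 : (∑ i ∈ Finset.Ico i0 (s + 1), padicValNat p (x - i)) =
        padicValNat p (x - i0) + ∑ i ∈ Finset.Ico (i0 + 1) (s + 1), padicValNat p (x - i) :=
      Finset.sum_eq_sum_Ico_succ_bot (by omega) _
    -- part 1 : ∑_{i<i0} = v((i0-1)!)
    have hpart1 : (∑ i ∈ Finset.Ico 1 i0, padicValNat p (x - i)) =
        padicValNat p ((i0 - 1)!) := by
      have hstep : ∀ i ∈ Finset.Ico 1 i0, padicValNat p (x - i) = padicValNat p (i0 - i) := by
        intro i hi
        rw [Finset.mem_Ico] at hi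
        have hxi : x - i = y + (i0 - i) := by omega
        rw [hxi]
        exact val_add_small hp (by omega) (by omega) hyd
      rw [Finset.sum_congr rfl hstep, val_factorial_sum hp]
      have hIcc : Finset.Ico 1 (i0 - 1 + 1) = Finset.Ico 1 i0 := by congr 1; omega
      rw [hIcc]
      apply Finset.sum_nbij' (fun i => i0 - i) (fun j => i0 - j)
      · intro i hi; rw [Finset.mem_Ico] at *; omega
      · intro j hj; rw [Finset.mem_Ico] at *; omega
      · intro i hi; rw [Finset.mem_Ico] at hi; omega
      · intro j hj; rw [Finset.mem_Ico] at hj; omega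
      · intro i hi; rfl
    -- part 2 : middle term ≥ a
    have hpart2 : a ≤ padicValNat p (x - i0) := by
      have hxy : x - i0 = y := by omega
      rw [hxy]
      exact (padicValNat_dvd_iff_le hy0).mp hyd
    -- part 3 : ∑_{i>i0} = v((s-i0)!)
    have hpart3 : (∑ i ∈ Finset.Ico (i0 + 1) (s + 1), padicValNat p (x - i)) =
        padicValNat p ((s - i0)!) := by
      have hstep : ∀ i ∈ Finset.Ico (i0 + 1) (s + 1),
          padicValNat p (x - i) = padicValNat p (i - i0) := by
        intro i hi
        rw [Finset.mem_Ico] at hi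
        have hxi : x - i = y - (i - i0) := by omega
        rw [hxi]
        exact val_sub_small hp (by omega) (by omega) (by omega) hyd
      rw [Finset.sum_congr rfl hstep, val_factorial_sum hp,
        Finset.sum_Ico_eq_sum_range, Finset.sum_Ico_eq_sum_range]
      apply Finset.sum_congr (by congr 1; omega)
      intro j hj
      congr 1
      omega
    -- factorial decomposition
    have hfacdec : padicValNat p (s !) = padicValNat p s +
        padicValNat p ((s - 1).choose (i0 - 1)) +
        padicValNat p ((i0 - 1)!) + padicValNat p ((s - i0)!) := by
      have hmm : (s - 1).choose (i0 - 1) * (i0 - 1)! * (s - i0)! = (s - 1)! := by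
        have := Nat.choose_mul_factorial_mul_factorial (show i0 - 1 ≤ s - 1 by omega)
        have hss : s - 1 - (i0 - 1) = s - i0 := by omega
        rw [hss] at this
        exact this
      have hfac : s * ((s - 1).choose (i0 - 1) * (i0 - 1)! * (s - i0)!) = s ! := by
        rw [hmm]
        exact Nat.mul_factorial_pred (by omega)
      have hc0 : 0 < (s - 1).choose (i0 - 1) := Nat.choose_pos (by omega)
      rw [← hfac, padicValNat.mul (by omega) (by positivity),
        padicValNat.mul (by positivity) (Nat.factorial_ne_zero _),
        padicValNat.mul (by omega) (Nat.factorial_ne_zero _)]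
      omega
    have hkum : padicValNat p s + padicValNat p ((s - 1).choose (i0 - 1)) ≤ a - 1 :=
      kummer_bound hp ha (by omega) (by omega) hsq
    -- combine
    have hprod := choose_mul_fact_eq_prod x s
    have hcpos : 0 < (x - 1).choose s := Nat.choose_pos (by omega)
    have hmul : padicValNat p ((x - 1).choose s * s !) =
        padicValNat p ((x - 1).choose s) + padicValNat p (s !) :=
      padicValNat.mul (by omega) (Nat.factorial_ne_zero s)
    have hvprod : padicValNat p (∏ i ∈ Finset.Ico 1 (s + 1), (x - i)) =
        ∑ i ∈ Finset.Ico 1 (s + 1), padicValNat p (x - i) := padic_val_prod hp hne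
    rw [hprod, hvprod] at hmul
    apply dvd_of_one_le_padicValNat
    omega


section comb
variable {n s : ℕ} {K : Type*} [CommRing K]

/-- all subsets of `Fin n` of size at most `s` -/
def Pfam (n s : ℕ) : Finset (Finset (Fin n)) :=
  (Finset.range (s + 1)).biUnion (fun j => Finset.powersetCard j Finset.univ)

lemma mem_Pfam {T : Finset (Fin n)} : T ∈ Pfam n s ↔ T.card ≤ s := by
  simp only [Pfam, Finset.mem_biUnion, Finset.mem_range, Finset.mem_powersetCard]
  constructor
  · rintro ⟨j, hj, _, hcard⟩; omega
  · intro h; exact ⟨T.card, by omega, Finset.subset_univ T, rfl⟩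

lemma card_Pfam : (Pfam n s).card = ∑ j ∈ Finset.range (s + 1), n.choose j := by
  rw [Pfam, Finset.card_biUnion]
  · apply Finset.sum_congr rfl
    intro j _
    rw [Finset.card_powersetCard, Finset.card_univ, Fintype.card_fin]
  · intro j _ k _ hjk
    apply Finset.disjoint_left.mpr
    intro T hT hT'
    rw [Finset.mem_powersetCard] at hT hT'
    exact hjk (hT.2 ▸ hT'.2 ▸ rfl)

lemma alt_sum (s : ℕ) (x : ℕ) (hx : 1 ≤ x) :
    ∑ j ∈ Finset.range (s + 1), (-1 : K) ^ (s - j) * (x.choose j : K) =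
    ((x - 1).choose s : K) := by
  induction s with
  | zero => simp
  | succ t ih =>
    rw [Finset.sum_range_succ]
    have h1 : ∀ j ∈ Finset.range (t + 1),
        (-1 : K) ^ (t + 1 - j) * (x.choose j : K) = -((-1 : K) ^ (t - j) * (x.choose j : K)) := by
      intro j hj
      rw [Finset.mem_range] at hj
      have h2 : t + 1 - j = (t - j) + 1 := by omega
      rw [h2, pow_succ]
      ring
    rw [Finset.sum_congr rfl h1, Finset.sum_neg_distrib, ih]
    have h3 : (x - 1).choose t + (x - 1).choose (t + 1) = x.choose (t + 1) := by
      have h4 := Nat.choose_succ_succ (x - 1) t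
      have h5 : (x - 1).succ = x := by omega
      rw [h5] at h4
      simpa using h4.symm
    have h6 : t + 1 - (t + 1) = 0 := by omega
    rw [h6, pow_zero, one_mul, ← h3]
    push_cast
    ring

end comb

section phis
variable {n s : ℕ} {K : Type*} [CommRing K]

lemma phiE (E S : Finset (Fin n)) :
    (∑ T ∈ (Pfam n s).attach,
      (if (↑T : Finset (Fin n)) ⊆ E then ((-1 : K)) ^ (s - (↑T : Finset (Fin n)).card) else 0) *
      (if (↑T : Finset (Fin n)) ⊆ S then (1 : K) else 0)) =
    ∑ j ∈ Finset.range (s + 1), (-1 : K) ^ (s - j) * (((E ∩ S).card.choose j) : K) := by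
  rw [Finset.sum_attach (Pfam n s) (fun T =>
    (if T ⊆ E then ((-1 : K)) ^ (s - T.card) else 0) * (if T ⊆ S then (1 : K) else 0))]
  have h1 : ∀ T ∈ Pfam n s,
      (if T ⊆ E then ((-1 : K)) ^ (s - T.card) else 0) * (if T ⊆ S then (1 : K) else 0) =
      if T ⊆ E ∩ S then ((-1 : K)) ^ (s - T.card) else 0 := by
    intro T _
    by_cases hE : T ⊆ E <;> by_cases hS : T ⊆ S <;>
      simp [hE, hS, Finset.subset_inter_iff]
  rw [Finset.sum_congr rfl h1, ← Finset.sum_filter]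
  have h2 : (Pfam n s).filter (fun T => T ⊆ E ∩ S) =
      (Finset.range (s + 1)).biUnion (fun j => Finset.powersetCard j (E ∩ S)) := by
    ext T
    simp only [Finset.mem_filter, mem_Pfam, Finset.mem_biUnion, Finset.mem_range,
      Finset.mem_powersetCard]
    constructor
    · rintro ⟨hc, hsub⟩; exact ⟨T.card, by omega, hsub, rfl⟩
    · rintro ⟨j, hj, hsub, rfl⟩; exact ⟨by omega, hsub⟩
  rw [h2, Finset.sum_biUnion ?hdisj]
  case hdisj =>
    intro j _ k _ hjk
    apply Finset.disjoint_left.mpr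
    intro T hT hT'
    rw [Finset.mem_powersetCard] at hT hT'
    exact hjk (hT.2 ▸ hT'.2 ▸ rfl)
  apply Finset.sum_congr rfl
  intro j hj
  have h3 : ∀ T ∈ Finset.powersetCard j (E ∩ S),
      ((-1 : K)) ^ (s - T.card) = ((-1 : K)) ^ (s - j) := by
    intro T hT; rw [Finset.mem_powersetCard] at hT; rw [hT.2]
  rw [Finset.sum_congr rfl h3, Finset.sum_const, Finset.card_powersetCard, nsmul_eq_mul, mul_comm]

lemma phiT (T0 S : Finset (Fin n)) (hT0 : T0.card < s) :
    (∑ T ∈ (Pfam n s).attach,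
      (((Finset.univ.filter (fun i : Fin n => insert i T0 = (↑T : Finset (Fin n)))).card : K)) *
      (if (↑T : Finset (Fin n)) ⊆ S then (1 : K) else 0)) =
    (if T0 ⊆ S then (1 : K) else 0) * (S.card : K) := by
  rw [Finset.sum_attach (Pfam n s) (fun T =>
    ((Finset.univ.filter (fun i : Fin n => insert i T0 = T)).card : K) *
    (if T ⊆ S then (1 : K) else 0))]
  have h1 : ∀ T ∈ Pfam n s,
      ((Finset.univ.filter (fun i : Fin n => insert i T0 = T)).card : K) *
      (if T ⊆ S then (1 : K) else 0) =
      ∑ i ∈ Finset.univ.filter (fun i : Fin n => insert i T0 = T),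
        (if insert i T0 ⊆ S then (1 : K) else 0) := by
    intro T _
    have h0 : ∀ i ∈ Finset.univ.filter (fun i : Fin n => insert i T0 = T),
        (if insert i T0 ⊆ S then (1 : K) else 0) = (if T ⊆ S then (1 : K) else 0) := by
      intro i hi
      rw [Finset.mem_filter] at hi
      rw [hi.2]
    rw [Finset.sum_congr rfl h0, Finset.sum_const, nsmul_eq_mul]
  rw [Finset.sum_congr rfl h1, Finset.sum_fiberwise_of_maps_to ?hmap]
  case hmap =>
    intro i _
    rw [mem_Pfam]
    have := Finset.card_insert_le i T0
    omega
  have h2 : ∀ i ∈ Finset.univ, (if insert i T0 ⊆ S then (1 : K) else 0) =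
      (if T0 ⊆ S then (1 : K) else 0) * (if i ∈ S then (1 : K) else 0) := by
    intro i _
    by_cases h : i ∈ S <;> by_cases h' : T0 ⊆ S <;>
      simp [Finset.insert_subset_iff, h, h']
  rw [Finset.sum_congr rfl h2, ← Finset.mul_sum]
  congr 1
  rw [Finset.sum_boole]
  have h3 : Finset.filter (fun i => i ∈ S) Finset.univ = S := by ext i; simp
  rw [h3]

end phis


lemma pascal_sum (m k : ℕ) : ∑ j ∈ Finset.range (k + 1), (m + 1).choose j =
    ∑ j ∈ Finset.range (k + 1), m.choose j + ∑ j ∈ Finset.range k, m.choose j := by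
  induction k with
  | zero => simp
  | succ t ih =>
    have e1 : ∑ j ∈ Finset.range (t + 1 + 1), (m + 1).choose j =
        (∑ j ∈ Finset.range (t + 1), (m + 1).choose j) + (m + 1).choose (t + 1) :=
      Finset.sum_range_succ _ _
    have e2 : ∑ j ∈ Finset.range (t + 1 + 1), m.choose j =
        (∑ j ∈ Finset.range (t + 1), m.choose j) + m.choose (t + 1) :=
      Finset.sum_range_succ _ _
    have e3 : ∑ j ∈ Finset.range (t + 1), m.choose j =
        (∑ j ∈ Finset.range t, m.choose j) + m.choose t :=
      Finset.sum_range_succ _ _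
    have h : (m + 1).choose (t + 1) = m.choose t + m.choose (t + 1) := by
      simpa using Nat.choose_succ_succ m t
    omega

/-- Theorem main2: if `L = {1,...,s}` with `1 ≤ s < q`, and `𝓕` is a `q`-modular
`L`-intersecting family with all member sizes divisible by `q`, then
`|𝓕| ≤ Σ_{j=0}^{s} C(n-1, j)`. -/
theorem stmt10 (p α n s : ℕ) (hp : p.Prime) (hα : 1 ≤ α) (q : ℕ) (hq : q = p ^ α)
    (hs1 : 1 ≤ s) (hsq : s < q)
    (𝓕 : Finset (Finset (Fin n)))
    (hsize : ∀ E ∈ 𝓕, q ∣ E.card)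
    (hint : ∀ E ∈ 𝓕, ∀ F' ∈ 𝓕, E ≠ F' → (E ∩ F').card % q ∈ Finset.Icc 1 s) :
    𝓕.card ≤ ∑ j ∈ Finset.range (s + 1), (n - 1).choose j := by
  classical
  subst hq
  by_cases hm1 : 𝓕.card ≤ 1
  · refine le_trans hm1 ?_
    calc 1 = (n - 1).choose 0 := (Nat.choose_zero_right _).symm
      _ ≤ _ := Finset.single_le_sum (fun j _ => Nat.zero_le ((n - 1).choose j))
          (Finset.mem_range.mpr (by omega))
  push_neg at hm1
  haveI : Fact p.Prime := ⟨hp⟩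
  have hq0 : 0 < p ^ α := pow_pos hp.pos α
  have hpq : p ∣ p ^ α := dvd_pow_self p (by omega)
  have hnon : ∀ E ∈ 𝓕, 0 < E.card := by
    intro E hE
    obtain ⟨F, hF, hne⟩ := Finset.exists_mem_ne hm1 E
    have hi := hint E hE F hF hne.symm
    rw [Finset.mem_Icc] at hi
    have h2 : (E ∩ F).card ≤ E.card := Finset.card_le_card Finset.inter_subset_left
    have h3 : (E ∩ F).card % (p ^ α) ≤ (E ∩ F).card := Nat.mod_le _ _
    omega
  obtain ⟨E1, hE1⟩ := Finset.card_pos.mp (by omega : 0 < 𝓕.card)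
  obtain ⟨x0, hx0E⟩ := Finset.card_pos.mp (hnon E1 hE1)
  have hsizege : ∀ E ∈ 𝓕, p ^ α ≤ E.card := fun E hE => Nat.le_of_dvd (hnon E hE) (hsize E hE)
  set K := ZMod p with hK
  set Ω : Finset (Fin n) := Finset.univ.erase x0 with hΩ
  set 𝒯 : Finset (Finset (Fin n)) :=
    (Finset.range s).biUnion (fun j => Finset.powersetCard j Ω) with h𝒯
  have hmem𝒯 : ∀ T : Finset (Fin n), T ∈ 𝒯 ↔ T ⊆ Ω ∧ T.card < s := by
    intro T
    simp only [h𝒯, Finset.mem_biUnion, Finset.mem_range, Finset.mem_powersetCard]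
    constructor
    · rintro ⟨j, hj, hsub, rfl⟩; exact ⟨hsub, hj⟩
    · rintro ⟨hsub, hcard⟩; exact ⟨T.card, by omega, hsub, rfl⟩
  set v : {E // E ∈ 𝓕} ⊕ {T // T ∈ 𝒯} → ({T // T ∈ Pfam n s} → K) :=
    Sum.elim
      (fun E T => if (↑T : Finset (Fin n)) ⊆ (↑E : Finset (Fin n)) then
        (-1 : K) ^ (s - (↑T : Finset (Fin n)).card) else 0)
      (fun T0 T => ((Finset.univ.filter
        (fun i : Fin n => insert i (↑T0 : Finset (Fin n)) = (↑T : Finset (Fin n)))).card : K))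
    with hv
  have hind : LinearIndependent K v := by
    rw [Fintype.linearIndependent_iff]
    intro g hg
    have hphi2 : ∀ S : Finset (Fin n),
        (∑ i, g i * (∑ T ∈ (Pfam n s).attach,
          v i T * (if (↑T : Finset (Fin n)) ⊆ S then (1 : K) else 0))) = 0 := by
      intro S
      have h0 := congrArg (fun w : {T // T ∈ Pfam n s} → K =>
        ∑ T ∈ (Pfam n s).attach, w T * (if (↑T : Finset (Fin n)) ⊆ S then (1 : K) else 0)) hg
      simp only [Finset.sum_apply, Pi.smul_apply, smul_eq_mul, Pi.zero_apply, zero_mul,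
        Finset.sum_const_zero, Finset.sum_mul] at h0
      have h1 : (∑ i, g i * (∑ T ∈ (Pfam n s).attach,
          v i T * (if (↑T : Finset (Fin n)) ⊆ S then (1 : K) else 0))) =
          ∑ i, ∑ T ∈ (Pfam n s).attach,
            g i * v i T * (if (↑T : Finset (Fin n)) ⊆ S then (1 : K) else 0) := by
        apply Finset.sum_congr rfl
        intro i _
        rw [Finset.mul_sum]
        apply Finset.sum_congr rfl
        intro T _
        ring
      rw [h1, Finset.sum_comm]
      convert h0 using 2 with T _
      rw [Finset.sum_mul]
    -- values of the T-part at members of 𝓕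
    have hTzero : ∀ (T0 : {T // T ∈ 𝒯}) (E' : Finset (Fin n)), E' ∈ 𝓕 →
        (∑ T ∈ (Pfam n s).attach,
          v (Sum.inr T0) T * (if (↑T : Finset (Fin n)) ⊆ E' then (1 : K) else 0)) = 0 := by
      intro T0 E' hE'
      have hT0mem := (hmem𝒯 _).mp T0.2
      have hφ := phiT (K := K) (↑T0 : Finset (Fin n)) E' hT0mem.2
      simp only [hv, Sum.elim_inr]
      rw [hφ]
      have hcast : ((E'.card : ℕ) : K) = 0 :=
        (ZMod.natCast_eq_zero_iff _ p).mpr (hpq.trans (hsize E' hE'))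
      rw [hcast, mul_zero]
    -- values of the E-part at members of 𝓕
    have hEval : ∀ (E : {E // E ∈ 𝓕}) (E' : Finset (Fin n)), E' ∈ 𝓕 →
        (∑ T ∈ (Pfam n s).attach,
          v (Sum.inl E) T * (if (↑T : Finset (Fin n)) ⊆ E' then (1 : K) else 0)) =
        ((((↑E : Finset (Fin n)) ∩ E').card - 1).choose s : K) := by
      intro E E' hE'
      simp only [hv, Sum.elim_inl]
      rw [phiE (K := K) (↑E : Finset (Fin n)) E']
      apply alt_sum
      -- 1 ≤ ((↑E ∩ E').card)
      by_cases hEE : (↑E : Finset (Fin n)) = E'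
      · rw [hEE, Finset.inter_self]
        exact hnon E' hE'
      · have hi := hint (↑E) E.2 E' hE' hEE
        rw [Finset.mem_Icc] at hi
        have : ((↑E : Finset (Fin n)) ∩ E').card % (p ^ α) ≤ ((↑E : Finset (Fin n)) ∩ E').card :=
          Nat.mod_le _ _
        omega
    -- Step 1 : E-coefficients vanish
    have hstep1 : ∀ E' : {E // E ∈ 𝓕}, g (Sum.inl E') = 0 := by
      intro E'
      have h1 := hphi2 (↑E' : Finset (Fin n))
      rw [Fintype.sum_sum_type] at h1
      have h2 : (∑ T0 : {T // T ∈ 𝒯}, g (Sum.inr T0) * (∑ T ∈ (Pfam n s).attach,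
          v (Sum.inr T0) T * (if (↑T : Finset (Fin n)) ⊆ (↑E' : Finset (Fin n))
            then (1 : K) else 0))) = 0 := by
        apply Finset.sum_eq_zero
        intro T0 _
        rw [hTzero T0 (↑E') E'.2, mul_zero]
      rw [h2, add_zero] at h1
      have h3 : ∀ b : {E // E ∈ 𝓕}, b ∈ Finset.univ → b ≠ E' →
          g (Sum.inl b) * (∑ T ∈ (Pfam n s).attach,
            v (Sum.inl b) T * (if (↑T : Finset (Fin n)) ⊆ (↑E' : Finset (Fin n))
              then (1 : K) else 0)) = 0 := by
        intro b _ hbne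
        rw [hEval b (↑E') E'.2]
        have hne2 : (↑b : Finset (Fin n)) ≠ (↑E' : Finset (Fin n)) := by
          intro h; exact hbne (Subtype.ext h)
        have hi := hint (↑b) b.2 (↑E') E'.2 hne2
        rw [Finset.mem_Icc] at hi
        have hdvd : p ∣ ((((↑b : Finset (Fin n)) ∩ (↑E' : Finset (Fin n))).card - 1).choose s) := by
          apply key_dvd hp hα hs1 hsq (by omega) (by omega)
        have hcast : (((((↑b : Finset (Fin n)) ∩ (↑E' : Finset (Fin n))).card - 1).choose s : ℕ) : K) = 0 :=
          (ZMod.natCast_eq_zero_iff _ p).mpr hdvd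
        rw [hcast, mul_zero]
      rw [Finset.sum_eq_single_of_mem E' (Finset.mem_univ E') h3] at h1
      rw [hEval E' (↑E') E'.2] at h1
      have hdiag : ¬ p ∣ ((((↑E' : Finset (Fin n)) ∩ (↑E' : Finset (Fin n))).card - 1).choose s) := by
        rw [Finset.inter_self]
        exact key_nondvd hp hs1 hsq (hsize (↑E') E'.2) (hnon (↑E') E'.2)
      have hcast : (((((↑E' : Finset (Fin n)) ∩ (↑E' : Finset (Fin n))).card - 1).choose s : ℕ) : K) ≠ 0 :=
        fun h0 => hdiag ((ZMod.natCast_eq_zero_iff _ p).mp h0)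
      exact (mul_eq_zero.mp h1).resolve_right hcast
    -- Step 2 : T-coefficients vanish
    have hstep2 : ∀ T1 : {T // T ∈ 𝒯}, g (Sum.inr T1) = 0 := by
      by_contra hex
      push_neg at hex
      obtain ⟨T1, hT1⟩ := hex
      set bad := Finset.univ.filter (fun T0 : {T // T ∈ 𝒯} => g (Sum.inr T0) ≠ 0) with hbad
      have hbadne : bad.Nonempty := ⟨T1, by simp [hbad, hT1]⟩
      obtain ⟨T0, hT0bad, hT0min⟩ :=
        Finset.exists_min_image bad (fun T => (↑T : Finset (Fin n)).card) hbadne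
      have hgT0 : g (Sum.inr T0) ≠ 0 := (Finset.mem_filter.mp hT0bad).2
      have hT0mem := (hmem𝒯 _).mp T0.2
      have hx0T0 : x0 ∉ (↑T0 : Finset (Fin n)) := by
        intro h
        have := hT0mem.1 h
        rw [hΩ] at this
        exact (Finset.ne_of_mem_erase this) rfl
      set S' : Finset (Fin n) :=
        if p ∣ ((↑T0 : Finset (Fin n)).card + 1) then (↑T0 : Finset (Fin n))
        else insert x0 (↑T0 : Finset (Fin n)) with hS'
      have hsubS : (↑T0 : Finset (Fin n)) ⊆ S' := by
        rw [hS']; split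
        · exact Finset.Subset.refl _
        · exact Finset.subset_insert _ _
      have hScard : ¬ (p : ℕ) ∣ S'.card := by
        rw [hS']; split
        · rename_i hdv
          intro hd
          have h5 := Nat.dvd_sub hdv hd
          have h6 : (↑T0 : Finset (Fin n)).card + 1 - (↑T0 : Finset (Fin n)).card = 1 := by omega
          rw [h6] at h5
          exact hp.ne_one (Nat.dvd_one.mp h5)
        · rename_i hdv
          rw [Finset.card_insert_of_notMem hx0T0]
          exact hdv
      have hsubT0 : ∀ T' : {T // T ∈ 𝒯}, (↑T' : Finset (Fin n)) ⊆ S' →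
          (↑T' : Finset (Fin n)) ⊆ (↑T0 : Finset (Fin n)) := by
        intro T' hsub
        have hT'mem := (hmem𝒯 _).mp T'.2
        have hx0T' : x0 ∉ (↑T' : Finset (Fin n)) := by
          intro h
          have := hT'mem.1 h
          rw [hΩ] at this
          exact (Finset.ne_of_mem_erase this) rfl
        intro a ha
        have := hsub ha
        rw [hS'] at this
        by_cases hcase : p ∣ ((↑T0 : Finset (Fin n)).card + 1)
        · rw [if_pos hcase] at this; exact this
        · rw [if_neg hcase] at this
          rcases Finset.mem_insert.mp this with h | h
          · exact absurd (h ▸ ha) hx0T'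
          · exact h
      have h1 := hphi2 S'
      rw [Fintype.sum_sum_type] at h1
      have h2 : (∑ E : {E // E ∈ 𝓕}, g (Sum.inl E) * (∑ T ∈ (Pfam n s).attach,
          v (Sum.inl E) T * (if (↑T : Finset (Fin n)) ⊆ S' then (1 : K) else 0))) = 0 := by
        apply Finset.sum_eq_zero
        intro E _
        rw [hstep1 E, zero_mul]
      rw [h2, zero_add] at h1
      have h3 : ∀ T' : {T // T ∈ 𝒯}, T' ∈ Finset.univ → T' ≠ T0 →
          g (Sum.inr T') * (∑ T ∈ (Pfam n s).attach,
            v (Sum.inr T') T * (if (↑T : Finset (Fin n)) ⊆ S' then (1 : K) else 0)) = 0 := by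
        intro T' _ hne
        by_cases hg' : g (Sum.inr T') = 0
        · rw [hg', zero_mul]
        · have hT'mem := (hmem𝒯 _).mp T'.2
          have hφ := phiT (K := K) (↑T' : Finset (Fin n)) S' hT'mem.2
          simp only [hv, Sum.elim_inr]
          rw [hφ]
          have hnsub : ¬ ((↑T' : Finset (Fin n)) ⊆ S') := by
            intro hsub
            have hsub2 := hsubT0 T' hsub
            have hT'bad : T' ∈ bad := by simp [hbad, hg']
            have hcard := hT0min T' hT'bad
            have : (↑T' : Finset (Fin n)) = (↑T0 : Finset (Fin n)) :=
              Finset.eq_of_subset_of_card_le hsub2 hcard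
            exact hne (Subtype.ext this)
          rw [if_neg hnsub, zero_mul, mul_zero]
      rw [Finset.sum_eq_single_of_mem T0 (Finset.mem_univ T0) h3] at h1
      have hT0mem2 := (hmem𝒯 _).mp T0.2
      have hφ := phiT (K := K) (↑T0 : Finset (Fin n)) S' hT0mem2.2
      simp only [hv, Sum.elim_inr] at h1
      rw [hφ, if_pos hsubS, one_mul] at h1
      have hSne : ((S'.card : ℕ) : K) ≠ 0 :=
        fun h0 => hScard ((ZMod.natCast_eq_zero_iff _ p).mp h0)
      exact hgT0 ((mul_eq_zero.mp h1).resolve_right hSne)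
    intro i
    cases i with
    | inl E => exact hstep1 E
    | inr T => exact hstep2 T
  -- counting
  have hcard := hind.fintype_card_le_finrank
  rw [Module.finrank_fintype_fun_eq_card, Fintype.card_sum, Fintype.card_coe,
    Fintype.card_coe, Fintype.card_coe] at hcard
  have h𝒫card : (Pfam n s).card = ∑ j ∈ Finset.range (s + 1), n.choose j := card_Pfam
  have hΩcard : Ω.card = n - 1 := by
    rw [hΩ, Finset.card_erase_of_mem (Finset.mem_univ _), Finset.card_univ, Fintype.card_fin]
  have h𝒯card : 𝒯.card = ∑ j ∈ Finset.range s, (n - 1).choose j := by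
    rw [h𝒯, Finset.card_biUnion]
    · apply Finset.sum_congr rfl
      intro j _
      rw [Finset.card_powersetCard, hΩcard]
    · intro j _ k _ hjk
      apply Finset.disjoint_left.mpr
      intro T hT hT'
      rw [Finset.mem_powersetCard] at hT hT'
      exact hjk (hT.2 ▸ hT'.2 ▸ rfl)
  have hn1 : 1 ≤ n := x0.pos
  have hpas := pascal_sum (n - 1) s
  have hn' : n - 1 + 1 = n := by omega
  rw [hn'] at hpas
  omega
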